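/- Let P and Q be joint probability laws of a pair of random variables (X, Y) with P ≪ Q. Then the relative entropy decomposes as D(P(X,Y)‖Q(X,Y)) = D(P(Y)‖Q(Y)) + D(P(X|Y)‖Q(X|Y)), where the conditional relative entropy is the P-expectation of D(P(X|Y=y)‖Q(X|Y=y)). -/

import Mathlib

open MeasureTheory ProbabilityTheory Filter
open scoped ENNReal

/-- Kullback–Leibler divergence `D(P‖Q) = ∫ log (dP/dQ) dP`, with value `∞` when `P` is not
absolutely continuous w.r.t. `Q` or the integral does not exist. -/
noncomputable def klDiv {α : Type*} [MeasurableSpace α] (P Q : Measure α) : ℝ≥0∞ :=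
  open scoped Classical in
  if P ≪ Q ∧ Integrable (fun x => Real.log (P.rnDeriv Q x).toReal) P then
    ENNReal.ofReal (∫ x, Real.log (P.rnDeriv Q x).toReal ∂P)
  else ⊤

section Aux

lemma aux_sub_one_le_mul_log {r : ℝ} (hr : 0 ≤ r) : r - 1 ≤ r * Real.log r := by
  rcases eq_or_lt_of_le hr with h | h
  · simp [← h]
  · have h1 := Real.log_le_sub_one_of_pos (inv_pos.mpr h)
    rw [Real.log_inv] at h1
    have h2 : r * r⁻¹ = 1 := mul_inv_cancel₀ h.ne'
    nlinarith

lemma aux_mul_neg_min_log_le_one {r : ℝ} (hr : 0 ≤ r) : r * (-(min (Real.log r) 0)) ≤ 1 := by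
  rcases le_or_gt 0 (Real.log r) with h | h
  · rw [min_eq_right h]; simp
  · rw [min_eq_left h.le]
    have := aux_sub_one_le_mul_log hr
    nlinarith

variable {α : Type*} [MeasurableSpace α] {μ ν : Measure α}

lemma aux_lintegral_neg_min_le_one [IsProbabilityMeasure μ] [IsProbabilityMeasure ν]
    (hμν : μ ≪ ν) :
    ∫⁻ x, ENNReal.ofReal (-(min (llr μ ν x) 0)) ∂μ ≤ 1 := by
  rw [← lintegral_rnDeriv_mul hμν
    ((show Measurable fun x => ENNReal.ofReal (-(min (llr μ ν x) 0)) from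
      ((measurable_llr μ ν).min measurable_const).neg.ennreal_ofReal)).aemeasurable]
  calc ∫⁻ x, (μ.rnDeriv ν x * ENNReal.ofReal (-(min (llr μ ν x) 0))) ∂ν
      ≤ ∫⁻ _, 1 ∂ν := by
        refine lintegral_mono_ae ?_
        filter_upwards [Measure.rnDeriv_lt_top μ ν] with x hx
        rw [← ENNReal.ofReal_toReal hx.ne, ← ENNReal.ofReal_mul ENNReal.toReal_nonneg]
        calc ENNReal.ofReal ((μ.rnDeriv ν x).toReal * (-(min (llr μ ν x) 0)))
            ≤ ENNReal.ofReal 1 :=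
              ENNReal.ofReal_le_ofReal (aux_mul_neg_min_log_le_one ENNReal.toReal_nonneg)
          _ = 1 := ENNReal.ofReal_one
    _ = 1 := by simp

lemma aux_integrable_min_llr [IsProbabilityMeasure μ] [IsProbabilityMeasure ν]
    (hμν : μ ≪ ν) : Integrable (fun x => min (llr μ ν x) 0) μ := by
  refine ⟨((measurable_llr μ ν).min measurable_const).aestronglyMeasurable, ?_⟩
  rw [hasFiniteIntegral_iff_norm]
  have : ∀ x, ENNReal.ofReal ‖min (llr μ ν x) 0‖ = ENNReal.ofReal (-(min (llr μ ν x) 0)) := by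
    intro x
    rw [Real.norm_eq_abs, abs_of_nonpos (min_le_right _ _)]
  simp_rw [this]
  exact lt_of_le_of_lt (aux_lintegral_neg_min_le_one hμν) ENNReal.one_lt_top

lemma aux_integral_neg_min_le_one [IsProbabilityMeasure μ] [IsProbabilityMeasure ν]
    (hμν : μ ≪ ν) : ∫ x, -(min (llr μ ν x) 0) ∂μ ≤ 1 := by
  rw [integral_eq_lintegral_of_nonneg_ae
    (Filter.Eventually.of_forall fun x => by simp [neg_nonneg, min_le_right])
    (show Measurable fun x => -(min (llr μ ν x) 0) from
      ((measurable_llr μ ν).min measurable_const).neg).aestronglyMeasurable]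
  exact ENNReal.toReal_le_of_le_ofReal one_pos.le (by simpa using aux_lintegral_neg_min_le_one hμν)

lemma aux_integral_llr_nonneg [IsProbabilityMeasure μ] [IsProbabilityMeasure ν]
    (hμν : μ ≪ ν) (h : Integrable (llr μ ν) μ) : 0 ≤ ∫ x, llr μ ν x ∂μ := by
  have h1 : ∫ x, llr μ ν x ∂μ = ∫ x, (μ.rnDeriv ν x).toReal • llr μ ν x ∂ν :=
    (integral_rnDeriv_smul hμν).symm
  have h2 : Integrable (fun x => (μ.rnDeriv ν x).toReal • llr μ ν x) ν :=
    (integrable_rnDeriv_smul_iff hμν).mpr h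
  have h3 : Integrable (fun x => (μ.rnDeriv ν x).toReal - 1) ν :=
    Measure.integrable_toReal_rnDeriv.sub (integrable_const 1)
  have h4 : ∫ x, ((μ.rnDeriv ν x).toReal - 1) ∂ν
      ≤ ∫ x, (μ.rnDeriv ν x).toReal • llr μ ν x ∂ν := by
    refine integral_mono h3 h2 fun x => ?_
    simpa [llr, smul_eq_mul] using aux_sub_one_le_mul_log (ENNReal.toReal_nonneg
      (a := μ.rnDeriv ν x))
  have h5 : ∫ x, ((μ.rnDeriv ν x).toReal - 1) ∂ν = 0 := by
    rw [integral_sub Measure.integrable_toReal_rnDeriv (integrable_const 1),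
      Measure.integral_toReal_rnDeriv hμν]
    simp
  linarith [h1 ▸ (h5 ▸ h4)]

lemma aux_integral_abs_llr_le [IsProbabilityMeasure μ] [IsProbabilityMeasure ν]
    (hμν : μ ≪ ν) (h : Integrable (llr μ ν) μ) :
    ∫ x, |llr μ ν x| ∂μ ≤ ∫ x, llr μ ν x ∂μ + 2 := by
  have hmin : Integrable (fun x => min (llr μ ν x) 0) μ := aux_integrable_min_llr hμν
  have habs : ∀ x, |llr μ ν x| = llr μ ν x - 2 * min (llr μ ν x) 0 := by
    intro x
    rcases le_or_gt 0 (llr μ ν x) with hx | hx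
    · rw [min_eq_right hx, abs_of_nonneg hx]; ring
    · rw [min_eq_left hx.le, abs_of_neg hx]; ring
  simp_rw [habs]
  rw [integral_sub h (hmin.const_mul 2), integral_const_mul]
  have := aux_integral_neg_min_le_one hμν
  rw [integral_neg] at this
  linarith

end Aux

lemma klDiv_def' {α : Type*} [MeasurableSpace α] (P Q : Measure α) :
    klDiv P Q = open scoped Classical in
      (if P ≪ Q ∧ Integrable (llr P Q) P then ENNReal.ofReal (∫ x, llr P Q x ∂P) else ⊤) := rfl

/-- Chain rule for relative entropy: for joint laws `P ≪ Q` of a pair `(Y, X)`,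
`D(P(X,Y)‖Q(X,Y)) = D(P(Y)‖Q(Y)) + E_{P(Y)}[D(P(X|Y=y)‖Q(X|Y=y))]`, where the conditional laws
are given by disintegration. -/
theorem klDiv_chain_rule
    {𝒴 𝒳 : Type*} [MeasurableSpace 𝒴] [MeasurableSpace 𝒳]
    [StandardBorelSpace 𝒳] [Nonempty 𝒳]
    (P Q : Measure (𝒴 × 𝒳)) [IsProbabilityMeasure P] [IsProbabilityMeasure Q]
    (hPQ : P ≪ Q) :
    klDiv P Q = klDiv P.fst Q.fst +
      ∫⁻ y, klDiv (P.condKernel y) (Q.condKernel y) ∂P.fst := by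
  classical
  set h : 𝒴 × 𝒳 → ℝ≥0∞ := P.rnDeriv Q with hh
  have mh : Measurable h := Measure.measurable_rnDeriv P Q
  set η := Q.condKernel with hη
  set H : 𝒴 → ℝ≥0∞ := fun y => ∫⁻ x, h (y, x) ∂η y with hH
  have mH : Measurable H := Measurable.lintegral_kernel_prod_right' mh
  have mhy : ∀ y, Measurable fun x => h (y, x) := fun _ => mh.comp measurable_prodMk_left
  have hfst : P.fst ≪ Q.fst := hPQ.map measurable_fst
  have hQd : Q = Q.fst ⊗ₘ η := (Measure.disintegrate Q Q.condKernel).symm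
  have hPd : P = P.fst ⊗ₘ P.condKernel := (Measure.disintegrate P P.condKernel).symm
  have hPQw : Q.withDensity h = P := Measure.withDensity_rnDeriv_eq P Q hPQ
  -- key slicing identity for a general measurable set
  have hslice : ∀ s : Set (𝒴 × 𝒳), MeasurableSet s →
      P s = ∫⁻ y, ∫⁻ x in Prod.mk y ⁻¹' s, h (y, x) ∂η y ∂Q.fst := by
    intro s hs
    conv_lhs => rw [← hPQw]
    rw [withDensity_apply _ hs, ← lintegral_indicator hs]
    conv_lhs => rw [hQd]
    rw [Measure.lintegral_compProd (mh.indicator hs)]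
    refine lintegral_congr fun y => ?_
    rw [← lintegral_indicator (measurable_prodMk_left hs)]
    refine lintegral_congr fun x => ?_
    by_cases hxy : (y, x) ∈ s
    · rw [Set.indicator_of_mem hxy]; exact (Set.indicator_of_mem hxy _).symm
    · rw [Set.indicator_of_notMem hxy]; exact (Set.indicator_of_notMem hxy _).symm
  -- the first marginal of P has density H w.r.t. the first marginal of Q
  have hμ₁ : P.fst = Q.fst.withDensity H := by
    ext s hs
    rw [withDensity_apply _ hs, Measure.fst_apply hs, hslice _ (measurable_fst hs),
      ← lintegral_indicator hs]
    refine lintegral_congr fun y => ?_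
    by_cases hy : y ∈ s
    · rw [Set.indicator_of_mem hy]
      have : Prod.mk y ⁻¹' (Prod.fst ⁻¹' s : Set (𝒴 × 𝒳)) = Set.univ := by
        ext x; simp [hy]
      rw [this, Measure.restrict_univ]
    · rw [Set.indicator_of_notMem hy]
      have : Prod.mk y ⁻¹' (Prod.fst ⁻¹' s : Set (𝒴 × 𝒳)) = ∅ := by
        ext x; simp [hy]
      rw [this, Measure.restrict_empty, lintegral_zero_measure]
  have hH_ae : ∀ᵐ y ∂Q.fst, H y < ∞ := by
    refine ae_lt_top mH ?_
    have : ∫⁻ y, H y ∂Q.fst = P.fst Set.univ := by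
      rw [hμ₁, withDensity_apply _ MeasurableSet.univ, setLIntegral_univ]
    rw [this]
    simp
  have hHrn : P.fst.rnDeriv Q.fst =ᵐ[Q.fst] H := by
    rw [hμ₁]; exact Measure.rnDeriv_withDensity Q.fst mH
  -- the kernel κ' with density w.r.t. η
  have mκ'f : Measurable (Function.uncurry fun y x => (H y)⁻¹ * h (y, x)) :=
    ((mH.comp measurable_fst).inv.mul mh)
  set κ' : Kernel 𝒴 𝒳 := Kernel.withDensity η (fun y x => (H y)⁻¹ * h (y, x)) with hκ'
  have hκ'app : ∀ y, κ' y = (η y).withDensity (fun x => (H y)⁻¹ * h (y, x)) :=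
    fun y => Kernel.withDensity_apply η mκ'f y
  have hκ'mass : ∀ y, κ' y Set.univ ≤ 1 := by
    intro y
    rw [hκ'app, withDensity_apply _ MeasurableSet.univ, setLIntegral_univ,
      lintegral_const_mul _ (mhy y)]
    have hHy : ∫⁻ a, h (y, a) ∂η y = H y := rfl
    rcases eq_or_ne (H y) 0 with h0 | h0
    · rw [hHy, h0]; simp
    · rcases eq_or_ne (H y) ∞ with hT | hT
      · rw [hT]; simp
      · rw [hHy, ENNReal.inv_mul_cancel h0 hT]
  haveI : IsFiniteKernel κ' := ⟨⟨1, ENNReal.one_lt_top, fun y => hκ'mass y⟩⟩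
  have hPκ' : P = P.fst ⊗ₘ κ' := by
    ext s hs
    rw [Measure.compProd_apply hs, hslice _ hs, hμ₁,
      lintegral_withDensity_eq_lintegral_mul _ mH (Kernel.measurable_kernel_prodMk_left hs)]
    refine lintegral_congr_ae ?_
    filter_upwards [hH_ae] with y hy
    rw [Pi.mul_apply, hκ'app, withDensity_apply _ (measurable_prodMk_left hs),
      lintegral_const_mul _ (mhy y)]
    have hle : ∫⁻ x in Prod.mk y ⁻¹' s, h (y, x) ∂η y ≤ H y := by
      rw [hH]; exact setLIntegral_le_lintegral _ _
    rcases eq_or_ne (H y) 0 with h0 | h0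
    · have : ∫⁻ x in Prod.mk y ⁻¹' s, h (y, x) ∂η y = 0 := le_antisymm (h0 ▸ hle) zero_le
      rw [this, h0]
      simp
    · rw [← mul_assoc, ENNReal.mul_inv_cancel h0 hy.ne, one_mul]
  have hκκ' : ∀ᵐ y ∂P.fst, κ' y = P.condKernel y :=
    eq_condKernel_of_measure_eq_compProd κ' hPκ'
  have hHpos : ∀ᵐ y ∂P.fst, 0 < H y ∧ H y < ∞ := by
    filter_upwards [Measure.rnDeriv_pos hfst, hfst.ae_le hHrn, hfst.ae_le hH_ae]
      with y h1 h2 h3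
    exact ⟨h2 ▸ h1, h3⟩
  have hYmain : ∀ᵐ y ∂P.fst,
      P.condKernel y = (η y).withDensity (fun x => (H y)⁻¹ * h (y, x)) := by
    filter_upwards [hκκ'] with y hy
    rw [← hy, hκ'app]
  set G : 𝒴 → 𝒳 → ℝ := fun y x => Real.log ((H y)⁻¹ * h (y, x)).toReal with hG
  have mG : StronglyMeasurable (Function.uncurry G) :=
    (Real.measurable_log.comp mκ'f.ennreal_toReal).stronglyMeasurable
  have mGy : ∀ y, Measurable (G y) := fun y =>
    Real.measurable_log.comp ((measurable_const.mul (mhy y)).ennreal_toReal)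
  have hcond_ac : ∀ᵐ y ∂P.fst, P.condKernel y ≪ η y := by
    filter_upwards [hYmain] with y hy
    exact hy ▸ withDensity_absolutelyContinuous _ _
  have hG_llr : ∀ᵐ y ∂P.fst, G y =ᵐ[P.condKernel y] llr (P.condKernel y) (η y) := by
    filter_upwards [hYmain] with y hy
    have hac : P.condKernel y ≪ η y := hy ▸ withDensity_absolutelyContinuous _ _
    have hrn : (P.condKernel y).rnDeriv (η y) =ᵐ[η y] fun x => (H y)⁻¹ * h (y, x) := by
      rw [hy]; exact Measure.rnDeriv_withDensity (η y) (measurable_const.mul (mhy y))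
    filter_upwards [hac.ae_le hrn] with x hx
    rw [llr, hx]
  set F : 𝒴 → ℝ≥0∞ := fun y =>
    if Integrable (G y) (P.condKernel y) then ENNReal.ofReal (∫ x, G y x ∂P.condKernel y)
    else ⊤ with hF
  have hFy : ∀ y, F y =
      if Integrable (G y) (P.condKernel y) then ENNReal.ofReal (∫ x, G y x ∂P.condKernel y)
      else ⊤ := fun y => by rw [hF]
  have hF_eq : ∀ᵐ y ∂P.fst, klDiv (P.condKernel y) (Q.condKernel y) = F y := by
    filter_upwards [hcond_ac, hG_llr] with y hac hGy
    by_cases hint : Integrable (G y) (P.condKernel y)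
    · rw [hFy y, if_pos hint, klDiv_def', if_pos ⟨hac, (integrable_congr hGy).mp hint⟩]
      exact congrArg _ (integral_congr_ae hGy.symm)
    · rw [hFy y, if_neg hint, klDiv_def', if_neg]
      rintro ⟨-, hint'⟩
      exact hint ((integrable_congr hGy).mpr hint')
  have mF : Measurable F := by
    refine Measurable.ite (measurableSet_kernel_integrable mG) ?_ measurable_const
    exact (mG.integral_kernel_prod_right (κ := P.condKernel)).measurable.ennreal_ofReal
  have hlint : ∫⁻ y, klDiv (P.condKernel y) (Q.condKernel y) ∂P.fst = ∫⁻ y, F y ∂P.fst :=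
    lintegral_congr_ae hF_eq
  -- a.e. decomposition of the log-likelihood ratio
  have hmapae : ∀ᵐ p ∂P, (0 < H p.1 ∧ H p.1 < ∞) ∧ P.fst.rnDeriv Q.fst p.1 = H p.1 := by
    have base : ∀ᵐ y ∂P.fst, (0 < H y ∧ H y < ∞) ∧ P.fst.rnDeriv Q.fst y = H y :=
      hHpos.and (hfst.ae_le hHrn)
    exact ae_of_ae_map measurable_fst.aemeasurable base
  have hllr_eq : llr P Q =ᵐ[P] fun p => llr P.fst Q.fst p.1 + G p.1 p.2 := by
    filter_upwards [Measure.rnDeriv_pos hPQ, hPQ.ae_le (Measure.rnDeriv_lt_top P Q), hmapae]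
      with p hp1 hp2 hp3
    obtain ⟨⟨hH1, hH2⟩, hH3⟩ := hp3
    have ha0 : (H p.1).toReal ≠ 0 := (ENNReal.toReal_pos hH1.ne' hH2.ne).ne'
    have hb0 : (h p).toReal ≠ 0 := (ENNReal.toReal_pos hp1.ne' hp2.ne).ne'
    have hGv : G p.1 p.2 = Real.log ((H p.1)⁻¹ * h p).toReal := rfl
    simp only [llr]
    rw [hH3, hGv, ENNReal.toReal_mul, ENNReal.toReal_inv,
      Real.log_mul (inv_ne_zero ha0) hb0, Real.log_inv]
    ring
  have mGP : Measurable fun p : 𝒴 × 𝒳 => G p.1 p.2 := mG.measurable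
  have mf' : Measurable fun p : 𝒴 × 𝒳 => llr P.fst Q.fst p.1 + G p.1 p.2 :=
    ((measurable_llr _ _).comp measurable_fst).add mGP
  by_cases hint : Integrable (llr P Q) P
  · -- finite case
    have hf' : Integrable (fun p => llr P.fst Q.fst p.1 + G p.1 p.2) P := hint.congr hllr_eq
    have hf'' : Integrable (fun p => llr P.fst Q.fst p.1 + G p.1 p.2)
        (P.fst ⊗ₘ P.condKernel) := by rw [← hPd]; exact hf'
    obtain ⟨hslice_int, hnorm_int⟩ :=
      (Measure.integrable_compProd_iff mf'.aestronglyMeasurable).mp hf''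
    have hGint : ∀ᵐ y ∂P.fst, Integrable (G y) (P.condKernel y) := by
      filter_upwards [hslice_int] with y hy
      exact (hy.sub (integrable_const (llr P.fst Q.fst y))).congr
        (Filter.Eventually.of_forall fun x => by simp)
    have hIG_nonneg : ∀ᵐ y ∂P.fst, 0 ≤ ∫ x, G y x ∂P.condKernel y := by
      filter_upwards [hGint, hG_llr, hcond_ac] with y hy hGy hac
      rw [integral_congr_ae hGy]
      exact aux_integral_llr_nonneg hac ((integrable_congr hGy).mp hy)
    have hD1le : ∀ᵐ y ∂P.fst, llr P.fst Q.fst y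
        ≤ ∫ x, ‖llr P.fst Q.fst y + G y x‖ ∂P.condKernel y := by
      filter_upwards [hslice_int, hGint, hIG_nonneg] with y h1 h2 h3
      have heq : ∫ x, (llr P.fst Q.fst y + G y x) ∂P.condKernel y
          = llr P.fst Q.fst y + ∫ x, G y x ∂P.condKernel y := by
        rw [integral_add (integrable_const _) h2, integral_const]
        simp
      calc llr P.fst Q.fst y
          ≤ llr P.fst Q.fst y + ∫ x, G y x ∂P.condKernel y := le_add_of_nonneg_right h3
        _ = ∫ x, (llr P.fst Q.fst y + G y x) ∂P.condKernel y := heq.symm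
        _ ≤ ‖∫ x, (llr P.fst Q.fst y + G y x) ∂P.condKernel y‖ := le_abs_self _
        _ ≤ ∫ x, ‖llr P.fst Q.fst y + G y x‖ ∂P.condKernel y := norm_integral_le_integral_norm _
    have hD1max_int : Integrable (fun y => max (llr P.fst Q.fst y) 0) P.fst := by
      refine Integrable.mono' hnorm_int.norm
        ((measurable_llr _ _).max measurable_const).aestronglyMeasurable ?_
      filter_upwards [hD1le] with y hy
      rw [Real.norm_eq_abs, abs_of_nonneg (le_max_right _ _), Real.norm_eq_abs]
      exact max_le (hy.trans (le_abs_self _)) (abs_nonneg _)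
    have hD1int : Integrable (llr P.fst Q.fst) P.fst := by
      refine (hD1max_int.add (aux_integrable_min_llr hfst)).congr
        (Filter.Eventually.of_forall fun y => ?_)
      simp only [Pi.add_apply]
      rw [max_add_min, add_zero]
    have hD1compP : Integrable (fun p : 𝒴 × 𝒳 => llr P.fst Q.fst p.1) P := by
      have h0 : Integrable (llr P.fst Q.fst) (P.map Prod.fst) := hD1int
      exact (integrable_map_measure (measurable_llr _ _).aestronglyMeasurable
        measurable_fst.aemeasurable).mp h0
    have hG_totP : Integrable (fun p : 𝒴 × 𝒳 => G p.1 p.2) P := by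
      refine (hf'.sub hD1compP).congr (Filter.Eventually.of_forall fun p => ?_)
      simp
    have hG_tot'' : Integrable (fun p : 𝒴 × 𝒳 => G p.1 p.2) (P.fst ⊗ₘ P.condKernel) := by
      rw [← hPd]; exact hG_totP
    obtain ⟨-, hGnorm_int⟩ :=
      (Measure.integrable_compProd_iff mGP.aestronglyMeasurable).mp hG_tot''
    have hIG_int : Integrable (fun y => ∫ x, G y x ∂P.condKernel y) P.fst := by
      refine hGnorm_int.mono'
        (mG.integral_kernel_prod_right (κ := P.condKernel)).aestronglyMeasurable ?_
      exact Filter.Eventually.of_forall fun y => norm_integral_le_integral_norm _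
    have hI : ∫ p, llr P Q p ∂P
        = ∫ y, llr P.fst Q.fst y ∂P.fst + ∫ y, (∫ x, G y x ∂P.condKernel y) ∂P.fst := by
      rw [integral_congr_ae hllr_eq, integral_add hD1compP hG_totP]
      congr 1
      · exact (integral_map measurable_fst.aemeasurable
          (measurable_llr _ _).aestronglyMeasurable).symm
      · have := Measure.integral_compProd hG_tot''
        rw [← hPd] at this
        exact this
    rw [klDiv_def' P Q, if_pos ⟨hPQ, hint⟩, klDiv_def' P.fst Q.fst, if_pos ⟨hfst, hD1int⟩, hlint]
    have hFIG : ∫⁻ y, F y ∂P.fst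
        = ENNReal.ofReal (∫ y, (∫ x, G y x ∂P.condKernel y) ∂P.fst) := by
      calc ∫⁻ y, F y ∂P.fst
          = ∫⁻ y, ENNReal.ofReal (∫ x, G y x ∂P.condKernel y) ∂P.fst :=
            lintegral_congr_ae (hGint.mono fun y hy => by rw [hFy y, if_pos hy])
        _ = ENNReal.ofReal (∫ y, (∫ x, G y x ∂P.condKernel y) ∂P.fst) :=
            (MeasureTheory.ofReal_integral_eq_lintegral_ofReal hIG_int hIG_nonneg).symm
    rw [hFIG, hI,
      ENNReal.ofReal_add (aux_integral_llr_nonneg hfst hD1int) (integral_nonneg_of_ae hIG_nonneg)]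
  · -- infinite case
    rw [klDiv_def' P Q, if_neg (fun hc => hint hc.2)]
    by_cases hD1int : Integrable (llr P.fst Q.fst) P.fst
    swap
    · rw [klDiv_def' P.fst Q.fst, if_neg (fun hc => hD1int hc.2), top_add]
    · rw [hlint]
      by_contra hne
      have hne' : ∫⁻ y, F y ∂P.fst ≠ ⊤ := by
        intro htop
        exact hne (by rw [htop, add_top])
      have hFlt : ∀ᵐ y ∂P.fst, F y < ⊤ := ae_lt_top mF hne'
      have hGint : ∀ᵐ y ∂P.fst, Integrable (G y) (P.condKernel y) := by
        filter_upwards [hFlt] with y hy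
        by_contra hni
        rw [hFy y, if_neg hni] at hy
        exact lt_irrefl _ hy
      have hIG_nonneg : ∀ᵐ y ∂P.fst, 0 ≤ ∫ x, G y x ∂P.condKernel y := by
        filter_upwards [hGint, hG_llr, hcond_ac] with y hy hGy hac
        rw [integral_congr_ae hGy]
        exact aux_integral_llr_nonneg hac ((integrable_congr hGy).mp hy)
      have hFval : ∀ᵐ y ∂P.fst, F y = ENNReal.ofReal (∫ x, G y x ∂P.condKernel y) :=
        hGint.mono fun y hy => by rw [hFy y, if_pos hy]
      have hIG_int : Integrable (fun y => ∫ x, G y x ∂P.condKernel y) P.fst := by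
        refine ⟨(mG.integral_kernel_prod_right (κ := P.condKernel)).aestronglyMeasurable, ?_⟩
        rw [hasFiniteIntegral_iff_norm]
        have heq : ∫⁻ y, ENNReal.ofReal ‖∫ x, G y x ∂P.condKernel y‖ ∂P.fst
            = ∫⁻ y, F y ∂P.fst := by
          refine lintegral_congr_ae ?_
          filter_upwards [hFval, hIG_nonneg] with y h1 h2
          rw [Real.norm_eq_abs, abs_of_nonneg h2, h1]
        rw [heq]
        exact lt_top_iff_ne_top.mpr hne'
      have hGnorm_int : Integrable (fun y => ∫ x, ‖G y x‖ ∂P.condKernel y) P.fst := by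
        refine (hIG_int.add (integrable_const 2)).mono'
          ((show StronglyMeasurable (Function.uncurry fun y x => ‖G y x‖) from mG.norm
            ).integral_kernel_prod_right (κ := P.condKernel)).aestronglyMeasurable ?_
        filter_upwards [hGint, hG_llr, hcond_ac] with y h1 h2 h3
        rw [Real.norm_eq_abs, abs_of_nonneg (integral_nonneg fun x => norm_nonneg _)]
        have habs : ∫ x, ‖G y x‖ ∂P.condKernel y
            = ∫ x, |llr (P.condKernel y) (η y) x| ∂P.condKernel y := by
          refine integral_congr_ae (h2.mono fun x hx => ?_)
          simp only [Real.norm_eq_abs, hx]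
        rw [habs]
        calc ∫ x, |llr (P.condKernel y) (η y) x| ∂P.condKernel y
            ≤ ∫ x, llr (P.condKernel y) (η y) x ∂P.condKernel y + 2 :=
              aux_integral_abs_llr_le h3 ((integrable_congr h2).mp h1)
          _ = ∫ x, G y x ∂P.condKernel y + 2 := by rw [integral_congr_ae h2]
      have hG_tot'' : Integrable (fun p : 𝒴 × 𝒳 => G p.1 p.2) (P.fst ⊗ₘ P.condKernel) :=
        (Measure.integrable_compProd_iff mGP.aestronglyMeasurable).mpr ⟨hGint, hGnorm_int⟩
      have hG_totP : Integrable (fun p : 𝒴 × 𝒳 => G p.1 p.2) P := by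
        rw [← hPd] at hG_tot''
        exact hG_tot''
      have hD1compP : Integrable (fun p : 𝒴 × 𝒳 => llr P.fst Q.fst p.1) P := by
        have h0 : Integrable (llr P.fst Q.fst) (P.map Prod.fst) := hD1int
        exact (integrable_map_measure (measurable_llr _ _).aestronglyMeasurable
          measurable_fst.aemeasurable).mp h0
      exact hint ((hD1compP.add hG_totP).congr hllr_eq.symm)
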